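/- arXiv:2405.06028 — 2 statements merged into one kernel-verified Lean document; each statement's English description precedes it below -/
import Mathlib

section
/- For each fixed t ∈ (0,1), the function r ↦ 1/(t·(-log r)) − 1/(-log(t·r)) is nonnegative and monotone increasing for r ∈ (0,1). -/
open Set

lemma aux7 (t a L1 L2 : ℝ) (ht : 0 < t) (ht1 : t < 1) (ha : 0 < a)
    (hL2 : 0 < L2) (hle : L2 ≤ L1) :
    1 / (t * L1) - 1 / (L1 + a) ≤ 1 / (t * L2) - 1 / (L2 + a) := by
  have hL1 : 0 < L1 := lt_of_lt_of_le hL2 hle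
  rw [div_sub_div _ _ (by positivity) (by positivity),
      div_sub_div _ _ (by positivity) (by positivity),
      div_le_div_iff₀ (by positivity) (by positivity)]
  have hfact : 0 ≤ (L1 + a) * (L2 + a) - t * L1 * L2 := by
    nlinarith [mul_nonneg ha.le hL1.le, mul_nonneg ha.le hL2.le, sq_nonneg a,
      mul_nonneg (sub_nonneg.2 ht1.le) (mul_pos hL1 hL2).le]
  nlinarith [mul_nonneg (mul_nonneg ht.le (sub_nonneg.2 hle)) hfact]
/-- For each fixed `t ∈ (0,1)`, the function
`r ↦ 1/(t·(-log r)) − 1/(-log(t·r))` is nonnegative and monotone increasing on `(0,1)`. -/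
theorem stmt7 (t : ℝ) (ht : t ∈ Ioo (0:ℝ) 1) :
    (∀ r ∈ Ioo (0:ℝ) 1,
        0 ≤ 1 / (t * (-Real.log r)) - 1 / (-Real.log (t * r))) ∧
      MonotoneOn (fun r : ℝ => 1 / (t * (-Real.log r)) - 1 / (-Real.log (t * r)))
        (Ioo (0:ℝ) 1) := by
  obtain ⟨ht0, ht1⟩ := ht
  have ha : 0 < -Real.log t := by
    simpa using Real.log_neg ht0 ht1
  have key : ∀ r ∈ Ioo (0:ℝ) 1,
      1 / (t * (-Real.log r)) - 1 / (-Real.log (t * r))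
        = 1 / (t * (-Real.log r)) - 1 / ((-Real.log r) + (-Real.log t)) := by
    intro r ⟨hr0, hr1⟩
    rw [Real.log_mul (ne_of_gt ht0) (ne_of_gt hr0)]
    ring_nf
  constructor
  · intro r hr
    rw [key r hr]
    obtain ⟨hr0, hr1⟩ := hr
    have hL : 0 < -Real.log r := by simpa using Real.log_neg hr0 hr1
    have h1 : t * (-Real.log r) ≤ (-Real.log r) + (-Real.log t) := by
      nlinarith
    have := one_div_le_one_div_of_le (by positivity) h1
    linarith
  · intro r1 h1 r2 h2 hle
    simp only
    rw [key r1 h1, key r2 h2]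
    obtain ⟨hr10, hr11⟩ := h1
    obtain ⟨hr20, hr21⟩ := h2
    have hL2 : 0 < -Real.log r2 := by simpa using Real.log_neg hr20 hr21
    have hLle : -Real.log r2 ≤ -Real.log r1 := by
      have := Real.log_le_log hr10 hle
      linarith
    exact aux7 t (-Real.log t) (-Real.log r1) (-Real.log r2) ht0 ht1 ha hL2 hLle
end

section
/- Let ρ ∈ (0,1), c₀ ≥ 0, and define a sequence (d_k) by d₀ = 1 and d_k = max{ω(ρ^k), ρ^{1/2} d_{k−1}} for k ≥ 1, where ω : [0,∞) → [0,∞) is nondecreasing with ∑_{j=1}^∞ ω(ρ^j) = c₀ < ∞. Then ∑_{j=1}^∞ d_j ≤ (c₀ + ρ^{1/2})/(1 − ρ^{1/2}) < ∞; in particular d_k → 0 as k → ∞. -/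
open Set Filter

/-- For `ρ ∈ (0,1)` and nondecreasing `ω ≥ 0` with `∑_{j≥1} ω(ρ^j) = c₀ < ∞`, the
sequence `d₀ = 1`, `d_k = max{ω(ρ^k), ρ^{1/2} d_{k−1}}` satisfies
`∑_{j≥1} d_j ≤ (c₀ + ρ^{1/2})/(1 − ρ^{1/2}) < ∞`; in particular `d_k → 0`. -/
theorem stmt14 (ρ c₀ : ℝ) (hρ : ρ ∈ Ioo (0:ℝ) 1) (ω : ℝ → ℝ)
    (hnn : ∀ r ∈ Ici (0:ℝ), 0 ≤ ω r) (hm : MonotoneOn ω (Ici 0))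
    (hsum : Summable fun j : ℕ => ω (ρ ^ (j + 1)))
    (hc : ∑' j : ℕ, ω (ρ ^ (j + 1)) = c₀)
    (d : ℕ → ℝ) (hd0 : d 0 = 1)
    (hrec : ∀ k : ℕ, d (k + 1) = max (ω (ρ ^ (k + 1))) (Real.sqrt ρ * d k)) :
    (Summable fun j : ℕ => d (j + 1)) ∧
      (∑' j : ℕ, d (j + 1)) ≤ (c₀ + Real.sqrt ρ) / (1 - Real.sqrt ρ) ∧
      Tendsto d atTop (nhds 0) := by
  obtain ⟨hρ0, hρ1⟩ := hρ
  set s := Real.sqrt ρ with hs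
  have hs0 : 0 ≤ s := Real.sqrt_nonneg ρ
  have hs1 : s < 1 := by
    rw [hs, show (1:ℝ) = Real.sqrt 1 by simp]
    exact Real.sqrt_lt_sqrt hρ0.le hρ1
  set f : ℕ → ℝ := fun i => ω (ρ ^ (i + 1)) with hf
  set g : ℕ → ℝ := fun j => s ^ j with hg
  have hfn : ∀ i, 0 ≤ f i := fun i => hnn _ (pow_pos hρ0 _).le
  have hgsum : Summable g := summable_geometric_of_lt_one hs0 hs1
  set c : ℕ → ℝ := fun n => ∑ k ∈ Finset.range (n + 1), f k * s ^ (n - k) with hcdef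
  have hcn : ∀ n, 0 ≤ c n := fun n =>
    Finset.sum_nonneg fun k _ => mul_nonneg (hfn k) (pow_nonneg hs0 _)
  -- recursion for c
  have hcrec : ∀ n, c (n + 1) = f (n + 1) + s * c n := by
    intro n
    have : c (n + 1) = (∑ k ∈ Finset.range (n + 1), f k * s ^ (n + 1 - k))
        + f (n + 1) * s ^ (n + 1 - (n + 1)) := by
      rw [hcdef]
      exact Finset.sum_range_succ _ (n + 1)
    rw [this]
    simp only [Nat.sub_self, pow_zero, mul_one]
    rw [add_comm]
    congr 1
    rw [Finset.mul_sum]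
    apply Finset.sum_congr rfl
    intro k hk
    have hk' : k ≤ n := Nat.lt_succ_iff.mp (Finset.mem_range.mp hk)
    have : n + 1 - k = (n - k) + 1 := by omega
    rw [this, pow_succ]
    ring
  -- key bound
  have hbd : ∀ n, d (n + 1) ≤ c n + s ^ (n + 1) := by
    intro n
    induction n with
    | zero =>
      rw [hrec 0, hd0, mul_one]
      have h1 : c 0 = f 0 := by simp [hcdef]
      have h2 : ω (ρ ^ (0 + 1)) = f 0 := rfl
      have h3 : s ^ (0 + 1) = s := by norm_num
      rw [h1, h2, h3]
      exact max_le (le_add_of_nonneg_right hs0) (le_add_of_nonneg_left (hfn 0))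
    | succ n ih =>
      rw [hrec (n + 1)]
      apply max_le
      · show f (n + 1) ≤ c (n + 1) + s ^ (n + 2)
        have : f (n + 1) ≤ c (n + 1) := by
          rw [hcrec n]
          exact le_add_of_nonneg_right (mul_nonneg hs0 (hcn n))
        exact le_trans this (le_add_of_nonneg_right (pow_nonneg hs0 _))
      · calc s * d (n + 1) ≤ s * (c n + s ^ (n + 1)) := by
              exact mul_le_mul_of_nonneg_left ih hs0
          _ = s * c n + s ^ (n + 2) := by ring
          _ ≤ c (n + 1) + s ^ (n + 2) := by
              rw [hcrec n]
              have := hfn (n + 1)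
              linarith
  -- summability of the majorant
  have hfnorm : Summable fun i => ‖f i‖ :=
    hsum.congr fun i => (Real.norm_of_nonneg (hfn i)).symm
  have hgnorm : Summable fun j => ‖g j‖ :=
    hgsum.congr fun j => (Real.norm_of_nonneg (pow_nonneg hs0 j)).symm
  have heq : ∀ n, (∑ kl ∈ Finset.HasAntidiagonal.antidiagonal n, f kl.1 * g kl.2) = c n := by
    intro n
    rw [Finset.Nat.sum_antidiagonal_eq_sum_range_succ_mk]
  have hcsum : Summable c :=
    ((summable_norm_sum_mul_antidiagonal_of_summable_norm hfnorm hgnorm).of_norm).congr heq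
  have hctsum : ∑' n, c n = c₀ * (1 - s)⁻¹ := by
    have := (tsum_mul_tsum_eq_tsum_sum_antidiagonal_of_summable_norm hfnorm hgnorm).symm
    calc ∑' n, c n = (∑' i, f i) * ∑' j, g j := by
          rw [← this]; exact tsum_congr fun n => (heq n).symm
      _ = c₀ * (1 - s)⁻¹ := by rw [hc, tsum_geometric_of_lt_one hs0 hs1]
  have hmaj : Summable (fun n => c n + s ^ (n + 1)) := by
    apply hcsum.add
    have : Summable (fun n => s * s ^ n) := hgsum.mul_left s
    exact this.congr fun n => by rw [pow_succ]; ring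
  have hdn : ∀ n, 0 ≤ d (n + 1) := fun n => by
    rw [hrec n]; exact le_trans (hfn n) (le_max_left _ _)
  have hdsum : Summable (fun j : ℕ => d (j + 1)) :=
    Summable.of_nonneg_of_le hdn hbd hmaj
  refine ⟨hdsum, ?_, ?_⟩
  · have hle := Summable.tsum_le_tsum hbd hdsum hmaj
    have h2 : ∑' n, (c n + s ^ (n + 1)) = c₀ * (1 - s)⁻¹ + s * (1 - s)⁻¹ := by
      rw [Summable.tsum_add hcsum (by
        have : Summable (fun n => s * s ^ n) := hgsum.mul_left s
        exact this.congr fun n => by rw [pow_succ]; ring), hctsum]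
      congr 1
      calc ∑' n, s ^ (n + 1) = ∑' n, s * s ^ n := tsum_congr fun n => by rw [pow_succ]; ring
        _ = s * ∑' n, s ^ n := by rw [tsum_mul_left]
        _ = s * (1 - s)⁻¹ := by rw [tsum_geometric_of_lt_one hs0 hs1]
    have hne : (1 : ℝ) - s ≠ 0 := by linarith
    calc ∑' j : ℕ, d (j + 1) ≤ c₀ * (1 - s)⁻¹ + s * (1 - s)⁻¹ := h2 ▸ hle
      _ = (c₀ + s) / (1 - s) := by field_simp
  · have h1 : Tendsto (fun n => d (n + 1)) atTop (nhds 0) := hdsum.tendsto_atTop_zero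
    exact (tendsto_add_atTop_iff_nat 1).mp h1
end
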